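/- Let k be a field of characteristic 2 and let L be the 3-dimensional Lie algebra over k with basis {e, h, f} and brackets ⁅h,e⁆ = e, ⁅h,f⁆ = f, ⁅e,f⁆ = h. Then L is not a restricted Lie algebra: there is no element y ∈ L whose adjoint map ad y equals (ad e)². In particular the derivation (ad e)² of L is not inner. -/

import Mathlib

/-- The 3-dimensional simple Lie algebra `𝔰` over a field `k` of
characteristic 2 (basis `e = B 0`, `h = B 1`, `f = B 2`, brackets `⁅h,e⁆ = e`,
`⁅h,f⁆ = f`, `⁅e,f⁆ = h`) is not restricted: no element `y` satisfies
`ad y = (ad e)²`, i.e. the derivation `(ad e)²` is not inner. -/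
theorem stmt_19 (k : Type*) [Field k] [CharP k 2]
    (L : Type*) [LieRing L] [LieAlgebra k L]
    (B : Module.Basis (Fin 3) k L)
    (hhe : ⁅B 1, B 0⁆ = B 0) (hhf : ⁅B 1, B 2⁆ = B 2) (hef : ⁅B 0, B 2⁆ = B 1) :
    ¬ ∃ y : L, LieAlgebra.ad k L y = (LieAlgebra.ad k L (B 0)) ^ 2 := by
  rintro ⟨y, hy⟩
  have heh : ⁅B 0, B 1⁆ = -B 0 := by rw [← lie_skew, hhe]
  have hfe : ⁅B 2, B 0⁆ = -B 1 := by rw [← lie_skew, hef]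
  have hfh : ⁅B 2, B 1⁆ = -B 2 := by rw [← lie_skew, hhf]
  have hrep := B.sum_repr y
  rw [Fin.sum_univ_three] at hrep
  set a := B.repr y 0 with ha
  set b := B.repr y 1 with hb
  set c := B.repr y 2 with hc
  have key : ∀ x : L, ⁅y, x⁆ = ⁅B 0, ⁅B 0, x⁆⁆ := by
    intro x
    have := LinearMap.congr_fun hy x
    simpa [LieAlgebra.ad_apply, pow_two, Module.End.mul_apply] using this
  -- evaluate at B 0
  have h0 : b • B 0 - c • B 1 = 0 := by
    have := key (B 0)
    rw [← hrep] at this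
    simp only [add_lie, smul_lie, lie_self, smul_zero, hhe, hfe, smul_neg,
      lie_zero, zero_add] at this
    linear_combination (norm := module) this
  have hb0 : b = 0 := by
    have := congrArg (fun z => B.repr z 0) h0
    simpa using this
  have hc0 : c = 0 := by
    have := congrArg (fun z => B.repr z 1) h0
    simpa using this
  -- evaluate at B 1
  have h1 : (-a) • B 0 = 0 := by
    have := key (B 1)
    rw [← hrep, hb0, hc0] at this
    simp only [add_lie, smul_lie, heh, hfh, lie_lie, zero_smul, add_zero,
      zero_add, lie_self, smul_neg, lie_neg, lie_zero, neg_zero] at this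
    linear_combination (norm := module) this
  have ha0 : a = 0 := by
    have := congrArg (fun z => B.repr z 0) h1
    simpa using this
  -- evaluate at B 2
  have h2 : (0 : L) = -B 0 := by
    have := key (B 2)
    rw [← hrep, ha0, hb0, hc0, hef, heh] at this
    simpa using this
  exact B.ne_zero 0 (by simpa using h2.symm)
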